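/- For every positive integer n, the decimal digit sum of 2^n is strictly greater than log₄ n, i.e., s(2^n) > (log n)/(log 4). -/

import Mathlib

/-- Digit sum splits: if `a < 10^k` and `d < 10`, then the digit sum of
`a + d * 10^k` is the digit sum of `a` plus `d`. -/
lemma sum_digits_split : ∀ (k a d : ℕ), a < 10 ^ k → d < 10 →
    (Nat.digits 10 (a + d * 10 ^ k)).sum = (Nat.digits 10 a).sum + d := by
  intro k
  induction k with
  | zero =>
    intro a d ha hd
    interval_cases a
    rcases Nat.eq_zero_or_pos d with rfl | hd0
    · simp
    · rw [Nat.digits_def' (by norm_num : 1 < 10) (by omega)]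
      simp [Nat.mod_eq_of_lt hd, Nat.div_eq_of_lt hd]
  | succ k ih =>
    intro a d ha hd
    rcases Nat.eq_zero_or_pos (a + d * 10 ^ (k + 1)) with h0 | hpos
    · have : a = 0 ∧ d = 0 := by
        constructor <;> nlinarith [(Nat.pow_pos (by norm_num : 0 < 10) : 0 < 10 ^ (k+1))]
      obtain ⟨rfl, rfl⟩ := this
      simp
    · rw [Nat.digits_def' (by norm_num : 1 < 10) (by omega)]
      have hmod : (a + d * 10 ^ (k + 1)) % 10 = a % 10 := by
        have : a + d * 10 ^ (k + 1) = a + (d * 10 ^ k) * 10 := by ring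
        rw [this, Nat.add_mul_mod_self_right]
      have hdiv : (a + d * 10 ^ (k + 1)) / 10 = a / 10 + d * 10 ^ k := by
        have : a + d * 10 ^ (k + 1) = a + (d * 10 ^ k) * 10 := by ring
        rw [this, Nat.add_mul_div_right _ _ (by norm_num : (0:ℕ) < 10)]
      rw [hmod, hdiv]
      have ha' : a / 10 < 10 ^ k := by
        rw [Nat.div_lt_iff_lt_mul (by norm_num : (0:ℕ) < 10)]
        calc a < 10 ^ (k + 1) := ha
        _ = 10 ^ k * 10 := by ring
      rw [List.sum_cons, ih (a / 10) d ha' hd]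
      rcases Nat.eq_zero_or_pos a with rfl | hapos
      · simp
      · have hda : Nat.digits 10 a = a % 10 :: Nat.digits 10 (a / 10) :=
          Nat.digits_def' (by norm_num : 1 < 10) hapos
        rw [hda, List.sum_cons]
        omega

/-- Lower bound on the trailing part: `2^k ≤ 2^n % 10^k` for `1 ≤ k ≤ n`. -/
lemma trailing_lb (n k : ℕ) (hk : 1 ≤ k) (hkn : k ≤ n) : 2 ^ k ≤ 2 ^ n % 10 ^ k := by
  have hdvd10 : (2:ℕ) ^ k ∣ 10 ^ k := pow_dvd_pow_of_dvd (by norm_num) k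
  have hdvd2 : (2:ℕ) ^ k ∣ 2 ^ n := pow_dvd_pow 2 hkn
  have hdvdmod : (2:ℕ) ^ k ∣ 2 ^ n % 10 ^ k := by
    have h1 : 2 ^ n % 10 ^ k = 2 ^ n - 10 ^ k * (2 ^ n / 10 ^ k) := by
      have := Nat.div_add_mod (2 ^ n) (10 ^ k)
      omega
    rw [h1]
    exact Nat.dvd_sub hdvd2 (Dvd.dvd.mul_right hdvd10 _)
  have hne : 2 ^ n % 10 ^ k ≠ 0 := by
    intro h
    have h10 : (10:ℕ) ^ k ∣ 2 ^ n := Nat.dvd_of_mod_eq_zero h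
    have h5 : (5:ℕ) ∣ 2 ^ n := by
      have : (5:ℕ) ∣ 10 ^ k := dvd_pow (by norm_num) (by omega)
      exact this.trans h10
    have := Nat.Prime.dvd_of_dvd_pow (p := 5) (by norm_num) h5
    norm_num at this
  exact Nat.le_of_dvd (Nat.pos_of_ne_zero hne) hdvdmod

/-- Key induction: the fourth power of the trailing `k` digits of `2^n` is
less than `10` to the `4`-power of their digit sum. -/
lemma key (n : ℕ) : ∀ k, 1 ≤ k → k ≤ n →
    (2 ^ n % 10 ^ k) ^ 4 < 10 ^ (4 ^ ((Nat.digits 10 (2 ^ n % 10 ^ k)).sum)) := by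
  intro k
  induction k with
  | zero => omega
  | succ k ih =>
    intro _ hkn
    rcases Nat.eq_zero_or_pos k with rfl | hk1
    · -- base case k+1 = 1
      set r := 2 ^ n % 10 ^ 1 with hr
      have hr2 : 2 ^ 1 ≤ r := trailing_lb n 1 le_rfl hkn
      have hrlt : r < 10 := by
        have : (10:ℕ) ^ 1 = 10 := by norm_num
        rw [hr, this]
        exact Nat.mod_lt _ (by norm_num)
      have hsum : (Nat.digits 10 r).sum = r := by
        rw [Nat.digits_def' (by norm_num : 1 < 10) (by omega)]
        simp [Nat.mod_eq_of_lt hrlt, Nat.div_eq_of_lt hrlt]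
      rw [hsum]
      calc r ^ 4 < 10 ^ 4 := Nat.pow_lt_pow_left hrlt (by norm_num)
        _ ≤ 10 ^ (4 ^ r) := Nat.pow_le_pow_right (by norm_num) (by
            calc 4 = 4 ^ 1 := by norm_num
            _ ≤ 4 ^ r := Nat.pow_le_pow_right (by norm_num) (by omega))
    · -- inductive step
      have hkn' : k ≤ n := by omega
      have IH := ih hk1 hkn'
      set a := 2 ^ n % 10 ^ k with hadef
      set d := (2 ^ n / 10 ^ k) % 10 with hddef
      have hsplit : 2 ^ n % 10 ^ (k + 1) = a + d * 10 ^ k := by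
        have h1 : (10:ℕ) ^ (k+1) = 10 ^ k * 10 := by ring
        have h2 := Nat.div_add_mod (2 ^ n % (10 ^ k * 10)) (10 ^ k)
        have h3 : 2 ^ n % (10 ^ k * 10) / 10 ^ k = 2 ^ n / 10 ^ k % 10 :=
          Nat.mod_mul_right_div_self _ _ _
        have h4 : 2 ^ n % (10 ^ k * 10) % 10 ^ k = 2 ^ n % 10 ^ k :=
          Nat.mod_mod_of_dvd _ (Dvd.intro 10 rfl)
        rw [h1, ← h2, h3, h4]
        ring
      have hd10 : d < 10 := Nat.mod_lt _ (by norm_num)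
      have halt : a < 10 ^ k := Nat.mod_lt _ (by positivity)
      rcases Nat.eq_zero_or_pos d with hd0 | hd1
      · rw [hsplit, hd0]
        simpa using IH
      · -- digit sum additivity
        have hsum : (Nat.digits 10 (a + d * 10 ^ k)).sum
            = (Nat.digits 10 a).sum + d := sum_digits_split k a d halt hd10
        set s := (Nat.digits 10 a).sum with hs
        -- from IH and a ≥ 2^k, deduce k < 4^s
        have ha2 : 2 ^ k ≤ a := trailing_lb n k hk1 hkn'
        have h2k : 2 ^ (4 * k) < 2 ^ (4 * 4 ^ s) := by
          calc 2 ^ (4 * k) = (2 ^ k) ^ 4 := by rw [← pow_mul, Nat.mul_comm]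
            _ ≤ a ^ 4 := Nat.pow_le_pow_left ha2 4
            _ < 10 ^ (4 ^ s) := IH
            _ ≤ 16 ^ (4 ^ s) := Nat.pow_le_pow_left (by norm_num) _
            _ = 2 ^ (4 * 4 ^ s) := by
                rw [show (16:ℕ) = 2 ^ 4 by norm_num, ← pow_mul]
        have hk4s : k < 4 ^ s := by
          have := Nat.pow_lt_pow_iff_right (a := 2) (by norm_num) |>.mp h2k
          omega
        -- conclude
        rw [hsplit, hsum]
        have hlt : a + d * 10 ^ k < 10 ^ (k + 1) := by
          rw [← hsplit]
          exact Nat.mod_lt _ (by positivity)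
        calc (a + d * 10 ^ k) ^ 4 < (10 ^ (k + 1)) ^ 4 :=
              Nat.pow_lt_pow_left hlt (by norm_num)
          _ = 10 ^ (4 * (k + 1)) := by rw [← pow_mul, Nat.mul_comm]
          _ ≤ 10 ^ (4 ^ (s + d)) := by
              apply Nat.pow_le_pow_right (by norm_num)
              calc 4 * (k + 1) ≤ 4 * 4 ^ s := by omega
                _ = 4 ^ (s + 1) := by rw [pow_succ, Nat.mul_comm]
                _ ≤ 4 ^ (s + d) := Nat.pow_le_pow_right (by norm_num) (by omega)

/-- The natural-number core: `n < 4 ^ s(2^n)`. -/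
lemma nat_core (n : ℕ) (hn : 0 < n) : n < 4 ^ ((Nat.digits 10 (2 ^ n)).sum) := by
  have h2n : (2:ℕ) ^ n < 10 ^ n := Nat.pow_lt_pow_left (by norm_num) (by omega)
  have hmod : 2 ^ n % 10 ^ n = 2 ^ n := Nat.mod_eq_of_lt h2n
  have hk := key n n hn le_rfl
  rw [hmod] at hk
  set s := (Nat.digits 10 (2 ^ n)).sum with hs
  have h2 : 2 ^ (4 * n) < 2 ^ (4 * 4 ^ s) := by
    calc 2 ^ (4 * n) = (2 ^ n) ^ 4 := by rw [← pow_mul, Nat.mul_comm]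
      _ < 10 ^ (4 ^ s) := hk
      _ ≤ 16 ^ (4 ^ s) := Nat.pow_le_pow_left (by norm_num) _
      _ = 2 ^ (4 * 4 ^ s) := by rw [show (16:ℕ) = 2 ^ 4 by norm_num, ← pow_mul]
  have := Nat.pow_lt_pow_iff_right (a := 2) (by norm_num) |>.mp h2
  omega

theorem stmt12 (n : ℕ) (hn : 0 < n) :
    Real.logb 4 n < ((Nat.digits 10 (2 ^ n)).sum : ℝ) := by
  set s := (Nat.digits 10 (2 ^ n)).sum with hs
  have hcore : n < 4 ^ s := nat_core n hn
  have hcast : (n : ℝ) < (4:ℝ) ^ s := by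
    calc (n:ℝ) < ((4 ^ s : ℕ) : ℝ) := by exact_mod_cast hcore
      _ = (4:ℝ) ^ s := by push_cast; ring
  calc Real.logb 4 (n:ℝ) < Real.logb 4 ((4:ℝ) ^ s) :=
        Real.logb_lt_logb (by norm_num) (by exact_mod_cast hn) hcast
    _ = s := by
        rw [Real.logb_pow, Real.logb_self_eq_one (by norm_num : (1:ℝ) < 4)]
        ring
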